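/- arXiv:1412.3263 — 5 statements merged into one kernel-verified Lean document; each statement's English description precedes it below -/
import Mathlib

section
/- Let x_1 ≥ x_2 ≥ ... ≥ x_n > 0 and y_1 ≥ y_2 ≥ ... ≥ y_n > 0 be real numbers such that ∏_{i≤k} x_i ≥ ∏_{i≤k} y_i for all 1 ≤ k ≤ n. Then ∑_{i=1}^n x_i ≥ ∑_{i=1}^n y_i. -/
lemma abel_aux (n : ℕ) (y c : ℕ → ℝ)
    (hy : ∀ i j, 1 ≤ i → i ≤ j → j ≤ n → y j ≤ y i)
    (hL : ∀ k, 1 ≤ k → k ≤ n → 0 ≤ ∑ i ∈ Finset.Icc 1 k, c i) :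
    y n * ∑ i ∈ Finset.Icc 1 n, c i ≤ ∑ i ∈ Finset.Icc 1 n, y i * c i := by
  induction n with
  | zero => simp
  | succ n ih =>
    have hstep : ∀ m : ℕ, Finset.Icc 1 (m + 1) = insert (m + 1) (Finset.Icc 1 m) := by
      intro m
      rw [← Finset.insert_Icc_right_eq_Icc_add_one (by omega)]
    have ih' := ih (fun i j h1 h2 h3 => hy i j h1 h2 (by omega))
      (fun k h1 h2 => hL k h1 (by omega))
    have hLn : 0 ≤ ∑ i ∈ Finset.Icc 1 n, c i := by
      rcases Nat.eq_zero_or_pos n with h | h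
      · simp [h]
      · exact hL n h (by omega)
    have hyy : y (n + 1) * ∑ i ∈ Finset.Icc 1 n, c i ≤
        y n * ∑ i ∈ Finset.Icc 1 n, c i := by
      rcases Nat.eq_zero_or_pos n with h | h
      · simp [h]
      · exact mul_le_mul_of_nonneg_right (hy n (n + 1) h (by omega) le_rfl) hLn
    rw [hstep n, Finset.sum_insert (by simp), Finset.sum_insert (by simp), mul_add]
    have := hyy.trans ih'
    linarith

theorem stmt2 (n : ℕ) (x y : ℕ → ℝ)
    (hxpos : ∀ i, 1 ≤ i → i ≤ n → 0 < x i)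
    (hypos : ∀ i, 1 ≤ i → i ≤ n → 0 < y i)
    (hxmono : ∀ i j, 1 ≤ i → i ≤ j → j ≤ n → x j ≤ x i)
    (hymono : ∀ i j, 1 ≤ i → i ≤ j → j ≤ n → y j ≤ y i)
    (hprod : ∀ k, 1 ≤ k → k ≤ n →
      ∏ i ∈ Finset.Icc 1 k, y i ≤ ∏ i ∈ Finset.Icc 1 k, x i) :
    ∑ i ∈ Finset.Icc 1 n, y i ≤ ∑ i ∈ Finset.Icc 1 n, x i := by
  set c : ℕ → ℝ := fun i => Real.log (x i) - Real.log (y i) with hc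
  have hL : ∀ k, 1 ≤ k → k ≤ n → 0 ≤ ∑ i ∈ Finset.Icc 1 k, c i := by
    intro k h1 h2
    have hx : ∀ i ∈ Finset.Icc 1 k, x i ≠ 0 := fun i hi => by
      simp only [Finset.mem_Icc] at hi
      exact (hxpos i hi.1 (hi.2.trans h2)).ne'
    have hy' : ∀ i ∈ Finset.Icc 1 k, y i ≠ 0 := fun i hi => by
      simp only [Finset.mem_Icc] at hi
      exact (hypos i hi.1 (hi.2.trans h2)).ne'
    have hyp : 0 < ∏ i ∈ Finset.Icc 1 k, y i :=
      Finset.prod_pos fun i hi => by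
        simp only [Finset.mem_Icc] at hi
        exact hypos i hi.1 (hi.2.trans h2)
    have : Real.log (∏ i ∈ Finset.Icc 1 k, y i) ≤
        Real.log (∏ i ∈ Finset.Icc 1 k, x i) :=
      Real.log_le_log hyp (hprod k h1 h2)
    rw [Real.log_prod hx, Real.log_prod hy'] at this
    simp only [hc, Finset.sum_sub_distrib]
    linarith
  have key := abel_aux n y c hymono hL
  have hynn : 0 ≤ y n * ∑ i ∈ Finset.Icc 1 n, c i := by
    rcases Nat.eq_zero_or_pos n with h | h
    · simp [h]
    · exact mul_nonneg (hypos n h le_rfl).le (hL n h le_rfl)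
  have hpt : ∀ i ∈ Finset.Icc 1 n, y i * c i ≤ x i - y i := by
    intro i hi
    simp only [Finset.mem_Icc] at hi
    have hxi := hxpos i hi.1 hi.2
    have hyi := hypos i hi.1 hi.2
    have hlog : Real.log (x i / y i) ≤ x i / y i - 1 :=
      Real.log_le_sub_one_of_pos (div_pos hxi hyi)
    rw [Real.log_div hxi.ne' hyi.ne'] at hlog
    have := mul_le_mul_of_nonneg_left hlog hyi.le
    have hdiv : y i * (x i / y i - 1) = x i - y i := by
      field_simp
    simp only [hc]
    linarith [hdiv ▸ this]
  have := Finset.sum_le_sum hpt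
  rw [Finset.sum_sub_distrib] at this
  linarith [hynn.trans key]
end

section
/- Let x_1 ≥ x_2 ≥ ... ≥ x_n > 0 and y_1 ≥ y_2 ≥ ... ≥ y_n > 0 be real numbers such that ∏_{i≤k} x_i ≥ ∏_{i≤k} y_i for all 1 ≤ k ≤ n. If ∑_{i=1}^n x_i = ∑_{i=1}^n y_i, then x_i = y_i for all i. -/
theorem stmt3 (n : ℕ) (x y : ℕ → ℝ)
    (hxpos : ∀ i, 1 ≤ i → i ≤ n → 0 < x i)
    (hypos : ∀ i, 1 ≤ i → i ≤ n → 0 < y i)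
    (hxmono : ∀ i j, 1 ≤ i → i ≤ j → j ≤ n → x j ≤ x i)
    (hymono : ∀ i j, 1 ≤ i → i ≤ j → j ≤ n → y j ≤ y i)
    (hprod : ∀ k, 1 ≤ k → k ≤ n →
      ∏ i ∈ Finset.Icc 1 k, y i ≤ ∏ i ∈ Finset.Icc 1 k, x i)
    (hsum : ∑ i ∈ Finset.Icc 1 n, x i = ∑ i ∈ Finset.Icc 1 n, y i) :
    ∀ i, 1 ≤ i → i ≤ n → x i = y i := by
  -- ℓ i = log (x i / y i)
  set l : ℕ → ℝ := fun i => Real.log (x i / y i) with hl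
  -- partial sums of l are nonnegative
  have hS : ∀ k, 1 ≤ k → k ≤ n → 0 ≤ ∑ i ∈ Finset.Icc 1 k, l i := by
    intro k hk1 hkn
    have hmem : ∀ i ∈ Finset.Icc 1 k, 1 ≤ i ∧ i ≤ n := by
      intro i hi
      rw [Finset.mem_Icc] at hi
      exact ⟨hi.1, hi.2.trans hkn⟩
    have h1 : ∑ i ∈ Finset.Icc 1 k, l i
        = Real.log (∏ i ∈ Finset.Icc 1 k, (x i / y i)) := by
      rw [Real.log_prod]
      intro i hi
      obtain ⟨h1', h2'⟩ := hmem i hi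
      exact div_ne_zero (ne_of_gt (hxpos i h1' h2')) (ne_of_gt (hypos i h1' h2'))
    rw [h1, Finset.prod_div_distrib]
    have hyp : 0 < ∏ i ∈ Finset.Icc 1 k, y i :=
      Finset.prod_pos fun i hi => hypos i (hmem i hi).1 (hmem i hi).2
    have : (1 : ℝ) ≤ (∏ i ∈ Finset.Icc 1 k, x i) / ∏ i ∈ Finset.Icc 1 k, y i :=
      (one_le_div hyp).mpr (hprod k hk1 hkn)
    exact Real.log_nonneg this
  -- Abel-type bound: y k * S k ≤ ∑ y i * l i
  have hAbel : ∀ k, 1 ≤ k → k ≤ n →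
      y k * ∑ i ∈ Finset.Icc 1 k, l i ≤ ∑ i ∈ Finset.Icc 1 k, y i * l i := by
    intro k hk1
    induction k, hk1 using Nat.le_induction with
    | base => intro _; simp
    | succ k hk ih =>
      intro hkn
      have hkn' : k ≤ n := le_trans (Nat.le_succ k) hkn
      have hrec := ih hkn'
      rw [Finset.sum_Icc_succ_top (by omega : 1 ≤ k + 1),
          Finset.sum_Icc_succ_top (by omega : 1 ≤ k + 1)]
      have hS' := hS k hk hkn'
      have hy : y (k + 1) ≤ y k := hymono k (k + 1) hk (Nat.le_succ k) hkn
      have h1 : y (k + 1) * ∑ i ∈ Finset.Icc 1 k, l i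
          ≤ y k * ∑ i ∈ Finset.Icc 1 k, l i :=
        mul_le_mul_of_nonneg_right hy hS'
      nlinarith [h1, hrec]
  -- termwise: y i * l i ≤ x i - y i
  have hterm : ∀ i, 1 ≤ i → i ≤ n → y i * l i ≤ x i - y i := by
    intro i h1 h2
    have hx := hxpos i h1 h2
    have hy := hypos i h1 h2
    have ht : 0 < x i / y i := div_pos hx hy
    have := Real.log_le_sub_one_of_pos ht
    have h3 : y i * l i ≤ y i * (x i / y i - 1) :=
      mul_le_mul_of_nonneg_left this (le_of_lt hy)
    have h4 : y i * (x i / y i - 1) = x i - y i := by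
      field_simp
    linarith [h3, h4 ▸ h3]
  rcases Nat.eq_zero_or_pos n with hn | hn
  · intro i h1 h2; omega
  -- total: 0 ≤ ∑ y i * l i
  have hT : 0 ≤ ∑ i ∈ Finset.Icc 1 n, y i * l i := by
    have h1 := hAbel n hn le_rfl
    have h2 := hS n hn le_rfl
    have hy := hypos n hn le_rfl
    nlinarith
  -- each term x i - y i - y i * l i is nonneg and sums to -T ≤ 0
  have hzero : ∀ i ∈ Finset.Icc 1 n, x i - y i - y i * l i = 0 := by
    have hsum0 : ∑ i ∈ Finset.Icc 1 n, (x i - y i - y i * l i) = 0 := by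
      have h1 : ∑ i ∈ Finset.Icc 1 n, (x i - y i - y i * l i)
          = (∑ i ∈ Finset.Icc 1 n, x i) - (∑ i ∈ Finset.Icc 1 n, y i)
            - ∑ i ∈ Finset.Icc 1 n, y i * l i := by
        rw [Finset.sum_sub_distrib, Finset.sum_sub_distrib]
      have hle : ∑ i ∈ Finset.Icc 1 n, (x i - y i - y i * l i) ≤ 0 := by
        rw [h1, hsum]; linarith
      have hge : 0 ≤ ∑ i ∈ Finset.Icc 1 n, (x i - y i - y i * l i) := by
        apply Finset.sum_nonneg
        intro i hi
        rw [Finset.mem_Icc] at hi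
        linarith [hterm i hi.1 hi.2]
      linarith
    intro i hi
    have hge : ∀ j ∈ Finset.Icc 1 n, 0 ≤ x j - y j - y j * l j := by
      intro j hj
      rw [Finset.mem_Icc] at hj
      linarith [hterm j hj.1 hj.2]
    exact (Finset.sum_eq_zero_iff_of_nonneg hge).mp hsum0 i hi
  intro i h1 h2
  have hx := hxpos i h1 h2
  have hy := hypos i h1 h2
  have hz := hzero i (Finset.mem_Icc.mpr ⟨h1, h2⟩)
  by_contra hne
  have ht : x i / y i ≠ 1 := by
    intro h
    exact hne (by field_simp at h; linarith)
  have hlt := Real.log_lt_sub_one_of_pos (div_pos hx hy) ht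
  have h3 : y i * l i < y i * (x i / y i - 1) :=
    (mul_lt_mul_iff_right₀ hy).mpr hlt
  have h4 : y i * (x i / y i - 1) = x i - y i := by field_simp
  rw [h4] at h3
  linarith
end

section
/- Let x_1 ≥ x_2 ≥ ... ≥ x_n > 0 and y_1 ≥ y_2 ≥ ... ≥ y_n > 0 be real numbers such that ∑_{i≥k} x_i ≥ ∑_{i≥k} y_i for all 1 ≤ k ≤ n. Then ∏_{i=1}^n x_i ≥ ∏_{i=1}^n y_i. -/
open Finset

lemma key_abel : ∀ (n : ℕ) (c d : ℕ → ℝ), (∀ i, i < n → 0 ≤ c i) →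
    (∀ i j, i ≤ j → j < n → c i ≤ c j) →
    (∀ k, k < n → 0 ≤ ∑ i ∈ Finset.Ico k n, d i) →
    0 ≤ ∑ i ∈ Finset.range n, c i * d i := by
  intro n
  induction n with
  | zero => simp
  | succ n ih =>
    intro c d hc hmono htail
    have h0 : ∑ i ∈ Finset.range (n+1), c i * d i
        = c 0 * (∑ i ∈ Finset.Ico 0 (n+1), d i)
          + ∑ i ∈ Finset.range n, (c (i+1) - c 0) * d (i+1) := by
      have e1 : ∑ i ∈ Finset.range (n+1), c i * d i
          = ∑ i ∈ Finset.range (n+1), ((c i - c 0) * d i + c 0 * d i) := by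
        apply Finset.sum_congr rfl; intro i _; ring
      rw [e1, Finset.sum_add_distrib, Finset.sum_range_succ']
      rw [← Finset.mul_sum]; simp only [Finset.range_eq_Ico]
      ring
    rw [h0]
    have h1 : 0 ≤ c 0 * (∑ i ∈ Finset.Ico 0 (n+1), d i) :=
      mul_nonneg (hc 0 (Nat.succ_pos n)) (htail 0 (Nat.succ_pos n))
    have h2 : 0 ≤ ∑ i ∈ Finset.range n, (c (i+1) - c 0) * d (i+1) := by
      apply ih
      · intro i hi
        have := hmono 0 (i+1) (Nat.zero_le _) (by omega)
        linarith
      · intro i j hij hj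
        have := hmono (i+1) (j+1) (by omega) (by omega)
        linarith
      · intro k hk
        have e2 : ∑ i ∈ Finset.Ico k n, d (i+1) = ∑ i ∈ Finset.Ico (k+1) (n+1), d i := by
          rw [Finset.sum_Ico_eq_sum_range, Finset.sum_Ico_eq_sum_range]
          have : n - k = n + 1 - (k + 1) := by omega
          rw [← this]
          apply Finset.sum_congr rfl; intro i _; congr 1; omega
        rw [e2]
        exact htail (k+1) (by omega)
    linarith

theorem stmt4 (n : ℕ) (x y : ℕ → ℝ)
    (hxpos : ∀ i, 1 ≤ i → i ≤ n → 0 < x i)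
    (hypos : ∀ i, 1 ≤ i → i ≤ n → 0 < y i)
    (hxmono : ∀ i j, 1 ≤ i → i ≤ j → j ≤ n → x j ≤ x i)
    (hymono : ∀ i j, 1 ≤ i → i ≤ j → j ≤ n → y j ≤ y i)
    (hsum : ∀ k, 1 ≤ k → k ≤ n →
      ∑ i ∈ Finset.Icc k n, y i ≤ ∑ i ∈ Finset.Icc k n, x i) :
    ∏ i ∈ Finset.Icc 1 n, y i ≤ ∏ i ∈ Finset.Icc 1 n, x i := by
  -- Step 1: Abel summation gives 0 ≤ ∑ (x i)⁻¹ * (x i - y i)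
  have hA : 0 ≤ ∑ i ∈ Finset.Icc 1 n, (x i)⁻¹ * (x i - y i) := by
    have hk := key_abel n (fun i => (x (i+1))⁻¹) (fun i => x (i+1) - y (i+1))
      (fun i hi => inv_nonneg.mpr (hxpos (i+1) (by omega) (by omega)).le)
      (fun i j hij hj => by
        show (x (i+1))⁻¹ ≤ (x (j+1))⁻¹
        exact inv_anti₀ (hxpos (j+1) (by omega) (by omega))
          (hxmono (i+1) (j+1) (by omega) (by omega) (by omega)))
      (fun k hk => by
        have e : ∀ f : ℕ → ℝ, ∑ i ∈ Finset.Ico k n, f (i+1)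
            = ∑ i ∈ Finset.Icc (k+1) n, f i := by
          intro f
          rw [← Finset.Ico_add_one_right_eq_Icc, Finset.sum_Ico_eq_sum_range,
            Finset.sum_Ico_eq_sum_range]
          have : n - k = n + 1 - (k + 1) := by omega
          rw [← this]
          apply Finset.sum_congr rfl; intro i _; congr 1; omega
        show 0 ≤ ∑ i ∈ Finset.Ico k n, (x (i+1) - y (i+1))
        rw [Finset.sum_sub_distrib, e x, e y]
        have := hsum (k+1) (by omega) (by omega)
        linarith)
    have e2 : ∑ i ∈ Finset.Icc 1 n, (x i)⁻¹ * (x i - y i)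
        = ∑ i ∈ Finset.range n, (x (i+1))⁻¹ * (x (i+1) - y (i+1)) := by
      rw [← Finset.Ico_add_one_right_eq_Icc, Finset.sum_Ico_eq_sum_range]
      have hn : n + 1 - 1 = n := by omega
      rw [hn]
      apply Finset.sum_congr rfl; intro i _; rw [Nat.add_comm 1 i]
    rw [e2]; exact hk
  -- Step 2: termwise log bound
  have hB : ∑ i ∈ Finset.Icc 1 n, (x i)⁻¹ * (x i - y i)
      ≤ ∑ i ∈ Finset.Icc 1 n, (Real.log (x i) - Real.log (y i)) := by
    apply Finset.sum_le_sum
    intro i hi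
    simp only [Finset.mem_Icc] at hi
    have hx := hxpos i hi.1 hi.2
    have hy := hypos i hi.1 hi.2
    have hlog : Real.log (y i / x i) ≤ y i / x i - 1 :=
      Real.log_le_sub_one_of_pos (div_pos hy hx)
    rw [Real.log_div hy.ne' hx.ne'] at hlog
    have he : (x i)⁻¹ * (x i - y i) = 1 - y i / x i := by field_simp
    rw [he]; linarith
  have hC : ∑ i ∈ Finset.Icc 1 n, Real.log (y i) ≤ ∑ i ∈ Finset.Icc 1 n, Real.log (x i) := by
    rw [Finset.sum_sub_distrib] at hB
    linarith
  calc ∏ i ∈ Finset.Icc 1 n, y i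
      = Real.exp (∑ i ∈ Finset.Icc 1 n, Real.log (y i)) := by
        rw [Real.exp_sum]
        refine Finset.prod_congr rfl fun i hi => ?_
        simp only [Finset.mem_Icc] at hi
        exact (Real.exp_log (hypos i hi.1 hi.2)).symm
    _ ≤ Real.exp (∑ i ∈ Finset.Icc 1 n, Real.log (x i)) := Real.exp_le_exp.mpr hC
    _ = ∏ i ∈ Finset.Icc 1 n, x i := by
        rw [Real.exp_sum]
        refine Finset.prod_congr rfl fun i hi => ?_
        simp only [Finset.mem_Icc] at hi
        exact Real.exp_log (hxpos i hi.1 hi.2)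
end

section
/- Let x_1 ≥ x_2 ≥ ... ≥ x_n > 0 and y_1 ≥ y_2 ≥ ... ≥ y_n > 0 be real numbers such that ∑_{i≥k} x_i ≥ ∑_{i≥k} y_i for all 1 ≤ k ≤ n. If ∏_{i=1}^n x_i = ∏_{i=1}^n y_i, then x_i = y_i for all i. -/
theorem stmt5 (n : ℕ) (x y : ℕ → ℝ)
    (hxpos : ∀ i, 1 ≤ i → i ≤ n → 0 < x i)
    (hypos : ∀ i, 1 ≤ i → i ≤ n → 0 < y i)
    (hxmono : ∀ i j, 1 ≤ i → i ≤ j → j ≤ n → x j ≤ x i)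
    (hymono : ∀ i j, 1 ≤ i → i ≤ j → j ≤ n → y j ≤ y i)
    (hsum : ∀ k, 1 ≤ k → k ≤ n →
      ∑ i ∈ Finset.Icc k n, y i ≤ ∑ i ∈ Finset.Icc k n, x i)
    (hprod : ∏ i ∈ Finset.Icc 1 n, x i = ∏ i ∈ Finset.Icc 1 n, y i) :
    ∀ i, 1 ≤ i → i ≤ n → x i = y i := by
  set s := Finset.Icc 1 n with hs
  have hmem : ∀ i, i ∈ s ↔ 1 ≤ i ∧ i ≤ n := by
    intro i; simp [hs, Finset.mem_Icc]
  set c : ℕ → ℝ := fun k => if k = 0 then 0 else 1 / x k with hc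
  -- telescoping
  have tele : ∀ i : ℕ, ∑ k ∈ Finset.Icc 1 i, (c k - c (k-1)) = c i := by
    intro i
    induction i with
    | zero => simp [hc]
    | succ m ih =>
      rw [Finset.sum_Icc_succ_top (by omega : 1 ≤ m + 1), ih]
      simp
  -- swap order of summation
  have swap : ∑ k ∈ Finset.Icc 1 n, ∑ i ∈ Finset.Icc k n, (c k - c (k-1)) * (y i - x i)
      = ∑ i ∈ Finset.Icc 1 n, ∑ k ∈ Finset.Icc 1 i, (c k - c (k-1)) * (y i - x i) := by
    apply Finset.sum_comm'
    intro k i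
    simp only [Finset.mem_Icc]
    omega
  -- Abel summation bound
  have key : ∑ i ∈ s, c i * (y i - x i) ≤ 0 := by
    have step1 : ∑ i ∈ s, c i * (y i - x i)
        = ∑ k ∈ Finset.Icc 1 n, (c k - c (k-1)) * ∑ i ∈ Finset.Icc k n, (y i - x i) := by
      calc ∑ i ∈ s, c i * (y i - x i)
          = ∑ i ∈ s, (∑ k ∈ Finset.Icc 1 i, (c k - c (k-1))) * (y i - x i) := by
            refine Finset.sum_congr rfl fun i hi => ?_
            rw [tele i]
        _ = ∑ i ∈ s, ∑ k ∈ Finset.Icc 1 i, (c k - c (k-1)) * (y i - x i) := by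
            refine Finset.sum_congr rfl fun i hi => ?_
            rw [Finset.sum_mul]
        _ = ∑ k ∈ Finset.Icc 1 n, ∑ i ∈ Finset.Icc k n, (c k - c (k-1)) * (y i - x i) :=
            swap.symm
        _ = ∑ k ∈ Finset.Icc 1 n, (c k - c (k-1)) * ∑ i ∈ Finset.Icc k n, (y i - x i) := by
            refine Finset.sum_congr rfl fun k hk => ?_
            rw [Finset.mul_sum]
    rw [step1]
    apply Finset.sum_nonpos
    intro k hk
    rw [Finset.mem_Icc] at hk
    have hck : 0 ≤ c k - c (k-1) := by
      rcases Nat.eq_or_lt_of_le hk.1 with h1 | h1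
      · have : k - 1 = 0 := by omega
        have hxk : 0 < x k := hxpos k hk.1 hk.2
        simp [hc, this, ← h1]
        rw [← h1] at hxk
        positivity
      · have hk1 : 1 ≤ k - 1 := by omega
        have hxk : 0 < x k := hxpos k hk.1 hk.2
        have hle : x k ≤ x (k-1) := hxmono (k-1) k hk1 (by omega) hk.2
        have hne : k ≠ 0 := by omega
        have hne1 : k - 1 ≠ 0 := by omega
        simp only [hc, if_neg hne, if_neg hne1]
        have := one_div_le_one_div_of_le hxk hle
        linarith
    have hT : ∑ i ∈ Finset.Icc k n, (y i - x i) ≤ 0 := by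
      rw [Finset.sum_sub_distrib]
      have := hsum k hk.1 hk.2
      linarith
    exact mul_nonpos_of_nonneg_of_nonpos hck hT
  have hxne : ∀ i ∈ s, x i ≠ 0 := by
    intro i hi; rw [hmem] at hi; exact (hxpos i hi.1 hi.2).ne'
  -- sum of ratios ≤ n
  have hsumratio : ∑ i ∈ s, y i / x i ≤ n := by
    have hrw : ∑ i ∈ s, y i / x i = (n : ℝ) + ∑ i ∈ s, c i * (y i - x i) := by
      have : ∀ i ∈ s, y i / x i = 1 + c i * (y i - x i) := by
        intro i hi
        rw [hmem] at hi
        have hne : i ≠ 0 := by omega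
        have hx := (hxpos i hi.1 hi.2).ne'
        simp only [hc, if_neg hne]
        field_simp
        ring
      rw [Finset.sum_congr rfl this, Finset.sum_add_distrib]
      simp [hs, Nat.card_Icc]
    rw [hrw]
    linarith
  -- product of ratios = 1
  have tpos : ∀ i ∈ s, 0 < y i / x i := by
    intro i hi; rw [hmem] at hi
    exact div_pos (hypos i hi.1 hi.2) (hxpos i hi.1 hi.2)
  have hprodt : ∏ i ∈ s, (y i / x i) = 1 := by
    rw [Finset.prod_div_distrib, ← hprod, div_self]
    exact Finset.prod_ne_zero_iff.mpr hxne
  -- sum of logs = 0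
  have hlogsum : ∑ i ∈ s, Real.log (y i / x i) = 0 := by
    rw [← Real.log_prod (s := s) (f := fun i => y i / x i) (fun i hi => (tpos i hi).ne'), hprodt, Real.log_one]
  have h1 : ∀ i ∈ s, Real.log (y i / x i) ≤ y i / x i - 1 :=
    fun i hi => Real.log_le_sub_one_of_pos (tpos i hi)
  have h2 : ∑ i ∈ s, (y i / x i - 1) ≤ 0 := by
    rw [Finset.sum_sub_distrib]
    simp only [Finset.sum_const, nsmul_eq_mul, mul_one]
    have : (s.card : ℝ) = n := by simp [hs, Nat.card_Icc]
    rw [this]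
    linarith
  have heq : ∑ i ∈ s, Real.log (y i / x i) = ∑ i ∈ s, (y i / x i - 1) := by
    have hle := Finset.sum_le_sum h1
    linarith
  have hpt := (Finset.sum_eq_sum_iff_of_le h1).mp heq
  intro i h1i hin
  have hi : i ∈ s := by rw [hmem]; exact ⟨h1i, hin⟩
  have := hpt i hi
  have ht1 : y i / x i = 1 := by
    by_contra hne
    exact absurd this (ne_of_lt (Real.log_lt_sub_one_of_pos (tpos i hi) hne))
  have hx := hxpos i h1i hin
  field_simp at ht1
  exact ht1.symm
end

section
/- Let n_1, ..., n_k and q be positive integers such that n_i divides lcm(q, n_1, ..., n_{i-1}, n_{i+1}, ..., n_k) for every i, and q divides L := lcm(n_1, ..., n_k). Then L² ≤ q · ∏_{i=1}^k n_i. -/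
lemma finsetLcm_ne_zero {s : Finset ℕ} {f : ℕ → ℕ} (hf : ∀ i ∈ s, f i ≠ 0) :
    s.lcm f ≠ 0 := by
  induction s using Finset.induction_on with
  | empty => simp
  | insert _ _ h ih =>
    rw [Finset.lcm_insert, lcm_eq_nat_lcm]
    exact Nat.lcm_ne_zero (hf _ (Finset.mem_insert_self _ _))
      (ih fun i hi => hf i (Finset.mem_insert_of_mem hi))

lemma exists_mem_factorization_ge {p a : ℕ} (ha : 0 < a) {s : Finset ℕ} {f : ℕ → ℕ}
    (hf : ∀ i ∈ s, f i ≠ 0) (h : a ≤ (s.lcm f).factorization p) :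
    ∃ i ∈ s, a ≤ (f i).factorization p := by
  induction s using Finset.induction_on with
  | empty => simp at h; omega
  | @insert b s hb ih =>
    rw [Finset.lcm_insert, lcm_eq_nat_lcm, Nat.factorization_lcm (hf _ (Finset.mem_insert_self _ _))
      (finsetLcm_ne_zero fun i hi => hf i (Finset.mem_insert_of_mem hi))] at h
    simp only [Finsupp.sup_apply, le_sup_iff] at h
    rcases h with h | h
    · exact ⟨b, Finset.mem_insert_self _ _, h⟩
    · obtain ⟨i, hi, hia⟩ := ih (fun i hi => hf i (Finset.mem_insert_of_mem hi)) h
      exact ⟨i, Finset.mem_insert_of_mem hi, hia⟩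

theorem stmt10 (k q : ℕ) (hq : 0 < q) (n : ℕ → ℕ)
    (hn : ∀ i, 1 ≤ i → i ≤ k → 0 < n i)
    (hdvd : ∀ i, 1 ≤ i → i ≤ k →
      n i ∣ Nat.lcm q (((Finset.Icc 1 k).erase i).lcm n))
    (hqL : q ∣ (Finset.Icc 1 k).lcm n) :
    ((Finset.Icc 1 k).lcm n) ^ 2 ≤ q * ∏ i ∈ Finset.Icc 1 k, n i := by
  set s := Finset.Icc 1 k with hs
  have hn' : ∀ i ∈ s, n i ≠ 0 := by
    intro i hi
    rw [hs, Finset.mem_Icc] at hi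
    exact (hn i hi.1 hi.2).ne'
  have hL : s.lcm n ≠ 0 := finsetLcm_ne_zero hn'
  have hP : ∏ i ∈ s, n i ≠ 0 := Finset.prod_ne_zero_iff.mpr hn'
  have hqP : q * ∏ i ∈ s, n i ≠ 0 := Nat.mul_ne_zero hq.ne' hP
  refine Nat.le_of_dvd (Nat.pos_of_ne_zero hqP) ?_
  rw [← Nat.factorization_le_iff_dvd (pow_ne_zero 2 hL) hqP]
  intro p
  rw [Nat.factorization_pow, Nat.factorization_mul hq.ne' hP,
    Nat.factorization_prod hn']
  simp only [Finsupp.coe_smul, Finsupp.coe_add, Finset.sum_apply',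
    Pi.smul_apply, Pi.add_apply, smul_eq_mul]
  set v := (s.lcm n).factorization p with hv
  rcases Nat.eq_zero_or_pos v with h0 | hvpos
  · omega
  -- bound: any divisor of L has factorization ≤ v
  have hle : ∀ m : ℕ, m ∣ s.lcm n → m.factorization p ≤ v := by
    intro m hm
    exact (Nat.factorization_le_iff_dvd (fun h => hL (by simpa [h] using hm)) hL).mpr hm p
  -- find i attaining v
  obtain ⟨i, hi, hiv⟩ := exists_mem_factorization_ge hvpos hn' le_rfl
  have hi' := Finset.mem_Icc.mp (hs ▸ hi)
  have hni : n i ≠ 0 := hn' i hi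
  have hM : (s.erase i).lcm n ≠ 0 :=
    finsetLcm_ne_zero fun j hj => hn' j (Finset.mem_of_mem_erase hj)
  have hd := hdvd i hi'.1 hi'.2
  have : (n i).factorization p ≤ max (q.factorization p)
      (((s.erase i).lcm n).factorization p) := by
    have := (Nat.factorization_le_iff_dvd hni
      (Nat.lcm_ne_zero hq.ne' hM)).mpr hd p
    rwa [Nat.factorization_lcm hq.ne' hM, Finsupp.sup_apply] at this
  have hqv : q.factorization p ≤ v := hle q hqL
  rcases le_max_iff.mp (le_trans hiv this) with hcase | hcase
  · -- q attains v
    have h1 : (n i).factorization p ≤ ∑ j ∈ s, (n j).factorization p :=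
      Finset.single_le_sum (f := fun j => (n j).factorization p)
        (fun j _ => Nat.zero_le _) hi
    omega
  · -- some j ≠ i attains v
    obtain ⟨j, hj, hjv⟩ := exists_mem_factorization_ge hvpos
      (fun j hj => hn' j (Finset.mem_of_mem_erase hj)) hcase
    have hji : j ≠ i := Finset.ne_of_mem_erase hj
    have hj' : j ∈ s := Finset.mem_of_mem_erase hj
    have hpair : {i, j} ⊆ s := by
      intro x hx
      rcases Finset.mem_insert.mp hx with rfl | hx
      · exact hi
      · rw [Finset.mem_singleton.mp hx]; exact hj'
    have h2 : (n i).factorization p + (n j).factorization p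
        ≤ ∑ x ∈ s, (n x).factorization p := by
      rw [← Finset.sum_pair (f := fun x => (n x).factorization p) (Ne.symm hji)]
      exact Finset.sum_le_sum_of_subset hpair
    omega
end
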